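/- Encode n ∈ ℤ by its two's-complement binary digits bin(n)_i = ⌊n / 2^i⌋ mod 2, and encode m ∈ ℕ by its Gray code Gray(m)_i = bin(m)_i XOR bin(m)_{i+1}; encode (m,n) ∈ ℕ × ℤ as the sequence of pairs ((Gray(m)_i, bin(n)_i))_{i ∈ ℕ} over the alphabet S = {0,1} × {0,1}. Define transformations z, x, y of S^ℕ by the transducer with states z, x, y, e over S: state z reads (a,1) and outputs (a,0) staying at z, reads (a,0) and outputs (a,1) passing to the identity state e; state x reads (1,b) and outputs (0,b), reads (0,b) and outputs (1,b), passing to e; state y reads (0,0) and outputs (0,0) staying at y, reads (1,0) and outputs (1,0) passing to x, and reads (a,1) and outputs (a,1) passing to e. Then, under the encoding: z maps the code of (m,n) to the code of (m,n+1); x exchanges the codes of (2m,n) and (2m+1,n); and y fixes the codes of (0,n) for all n, exchanges the codes of (k−1,n) and (k,n) for every even k ≥ 2 and every n divisible by 2^{v₂(k)} (v₂ the 2-adic valuation), and fixes the codes of (k−1,n) and (k,n) for even k when 2^{v₂(k)} does not divide n. Consequently, the Schreier graph of the action of x, y, z on the orbit of the code of (0,0) is isomorphic to the Barbieri–Sablik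 H-graph. -/

import Mathlib

open scoped Classical

/-- Two's-complement binary digits of an integer: `binZ n i = ⌊n / 2^i⌋ mod 2`. -/
def binZ (n : ℤ) (i : ℕ) : Bool :=
  decide (Int.fdiv n (2 ^ i) % 2 = 1)

/-- Binary digits of a natural number. -/
def binN (m : ℕ) (i : ℕ) : Bool :=
  decide (m / 2 ^ i % 2 = 1)

/-- Gray code of a natural number: `Gray(m)_i = bin(m)_i XOR bin(m)_{i+1}`. -/
def gray (m : ℕ) (i : ℕ) : Bool :=
  xor (binN m i) (binN m (i + 1))

/-- Encoding of `(m,n) ∈ ℕ × ℤ` over the alphabet `S = {0,1} × {0,1}`: the sequence of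
pairs `((Gray m)_i, (bin n)_i)`. -/
def code (m : ℕ) (n : ℤ) : ℕ → Bool × Bool :=
  fun i => (gray m i, binZ n i)

/-- The transformation given by state `z` of the transducer: it reads `(a,1)` outputting
`(a,0)` and staying at `z`, and reads `(a,0)` outputting `(a,1)` and passing to the
identity state (an odometer on second components). -/
def zAct (ξ : ℕ → Bool × Bool) : ℕ → Bool × Bool := fun n =>
  ((ξ n).1, if ∀ i < n, (ξ i).2 = true then !(ξ n).2 else (ξ n).2)

/-- The transformation given by state `x` of the transducer: it flips the first component
of the first letter and passes to the identity state. -/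
def xAct (ξ : ℕ → Bool × Bool) : ℕ → Bool × Bool := fun n =>
  if n = 0 then (!(ξ 0).1, (ξ 0).2) else ξ n

/-- The transformation given by state `y` of the transducer: it reads `(0,0)` outputting
`(0,0)` and staying at `y`; reads `(1,0)` outputting `(1,0)` and passing to state `x`;
and reads `(a,1)` outputting `(a,1)` and passing to the identity state.  Concretely, at
the first letter different from `(0,0)`: if that letter is `(1,0)`, the first component
of the following letter is flipped; otherwise nothing changes. -/
noncomputable def yAct (ξ : ℕ → Bool × Bool) : ℕ → Bool × Bool := fun n =>
  if h : ∃ i, ξ i ≠ (false, false) then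
    if n = Nat.find h + 1 ∧ ξ (Nat.find h) = (true, false) then
      (!(ξ n).1, (ξ n).2)
    else ξ n
  else ξ n



set_option linter.unusedSectionVars false

lemma two_pow_pos' (i : ℕ) : (0:ℤ) < 2 ^ i := by positivity

lemma binZ_eq (n : ℤ) (i : ℕ) : binZ n i = decide (n / 2 ^ i % 2 = 1) := by
  rw [binZ, Int.fdiv_eq_ediv_of_nonneg _ (le_of_lt (two_pow_pos' i))]

lemma ediv_eq_of (a b q r : ℤ) (hb : 0 < b) (hr : 0 ≤ r) (hrb : r < b)
    (heq : a = b * q + r) : a / b = q :=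
  ((Int.ediv_emod_unique hb).2 ⟨by omega, hr, hrb⟩).1

/-- low bits all one iff `2^i ∣ n+1`. -/
lemma lowOnes (n : ℤ) : ∀ i : ℕ, (∀ j < i, binZ n j = true) ↔ (2:ℤ) ^ i ∣ n + 1 := by
  intro i
  induction i with
  | zero => simp
  | succ i ih =>
    constructor
    · intro h
      obtain ⟨t, ht⟩ := ih.1 (fun j hj => h j (hj.trans (Nat.lt_succ_self i)))
      have hq : n / 2 ^ i = t - 1 :=
        ediv_eq_of _ _ _ (2 ^ i - 1) (two_pow_pos' i) (by have := two_pow_pos' i; omega)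
          (by omega) (by linarith [ht])
      have hb := h i (Nat.lt_succ_self i)
      rw [binZ_eq, hq, decide_eq_true_iff] at hb
      obtain ⟨s, hs⟩ : (2:ℤ) ∣ t := by omega
      exact ⟨s, by rw [ht, hs, pow_succ]; ring⟩
    · intro h j hj
      have hdvdi : (2:ℤ) ^ i ∣ n + 1 := dvd_trans (pow_dvd_pow 2 (Nat.le_succ i)) h
      obtain ⟨t, ht⟩ := h
      rcases Nat.lt_or_ge j i with hji | hji
      · exact (ih.2 hdvdi) j hji
      · have hj' : j = i := by omega
        subst hj'
        have hq : n / 2 ^ j = 2 * t - 1 :=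
          ediv_eq_of _ _ _ (2 ^ j - 1) (two_pow_pos' j) (by have := two_pow_pos' j; omega)
            (by omega) (by rw [pow_succ] at ht; linarith [ht])
        rw [binZ_eq, hq, decide_eq_true_iff]
        omega

lemma binZ_succ_int (n : ℤ) (i : ℕ) :
    binZ (n + 1) i = if (2:ℤ) ^ i ∣ n + 1 then !(binZ n i) else binZ n i := by
  split_ifs with h
  · obtain ⟨t, ht⟩ := h
    have hq : n / 2 ^ i = t - 1 :=
      ediv_eq_of _ _ _ (2 ^ i - 1) (two_pow_pos' i) (by have := two_pow_pos' i; omega)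
        (by omega) (by linarith [ht])
    have hq1 : (n + 1) / 2 ^ i = t := by
      rw [ht]; exact Int.mul_ediv_cancel_left t (by positivity)
    rw [binZ_eq, binZ_eq, hq, hq1]
    by_cases h2 : (t - 1) % 2 = 1
    · simp only [h2, decide_true, Bool.not_true, decide_eq_false_iff_not]; omega
    · simp only [decide_eq_false h2, Bool.not_false, decide_eq_true_eq]; omega
  · have hrb := Int.emod_lt_of_pos n (two_pow_pos' i)
    have hr0 := Int.emod_nonneg n (ne_of_gt (two_pow_pos' i))
    have hne : n % 2 ^ i ≠ 2 ^ i - 1 := by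
      intro hc
      exact h ⟨n / 2 ^ i + 1, by have := Int.mul_ediv_add_emod n (2 ^ i); linarith⟩
    have hq1 : (n + 1) / 2 ^ i = n / 2 ^ i :=
      ediv_eq_of _ _ _ (n % 2 ^ i + 1) (two_pow_pos' i) (by omega) (by omega)
        (by have := Int.mul_ediv_add_emod n (2 ^ i); linarith)
    rw [binZ_eq, binZ_eq, hq1]

lemma binZ_shift (n : ℤ) (i : ℕ) : binZ n (i + 1) = binZ (n / 2) i := by
  rw [binZ_eq, binZ_eq]
  have key : n / 2 / 2 ^ i = n / 2 ^ (i + 1) := by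
    set q := n / 2 ^ (i + 1) with hq
    set r := n % 2 ^ (i + 1) with hr
    have hd : 2 ^ (i + 1) * q + r = n := Int.mul_ediv_add_emod n (2 ^ (i + 1))
    have hr0 : 0 ≤ r := Int.emod_nonneg n (ne_of_gt (two_pow_pos' (i + 1)))
    have hrb : r < 2 ^ (i + 1) := Int.emod_lt_of_pos n (two_pow_pos' (i + 1))
    have hn : n = r + 2 * (2 ^ i * q) := by rw [← hd, pow_succ]; ring
    have h2 : n / 2 = 2 ^ i * q + r / 2 := by
      rw [hn, Int.add_mul_ediv_left _ _ (by norm_num : (2:ℤ) ≠ 0)]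
      omega
    refine Eq.symm ?_
    refine Eq.symm (ediv_eq_of _ _ _ (r / 2) (two_pow_pos' i) (by omega) ?_ h2)
    rw [pow_succ] at hrb
    omega
  rw [key]

lemma binZ_zero_iff (n : ℤ) : binZ n 0 = decide (n % 2 = 1) := by
  rw [binZ_eq]; norm_num

lemma binZ_inj' : ∀ N : ℕ, ∀ n n' : ℤ, (n - n').natAbs ≤ N →
    (∀ i, binZ n i = binZ n' i) → n = n' := by
  intro N
  induction N with
  | zero => intro n n' hle _; omega
  | succ N ih =>
    intro n n' hle h
    have h0 := h 0
    rw [binZ_zero_iff, binZ_zero_iff, decide_eq_decide] at h0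
    have hmod : n % 2 = n' % 2 := by omega
    by_cases hne : n = n'
    · exact hne
    · have hsh : ∀ i, binZ (n / 2) i = binZ (n' / 2) i := by
        intro i; rw [← binZ_shift, ← binZ_shift]; exact h (i + 1)
      have heq : n / 2 = n' / 2 := ih _ _ (by omega) hsh
      omega

lemma binZ_inj {n n' : ℤ} (h : ∀ i, binZ n i = binZ n' i) : n = n' :=
  binZ_inj' (n - n').natAbs n n' le_rfl h

lemma binZ_low_of_dvd {n : ℤ} {v : ℕ} (h : (2:ℤ) ^ v ∣ n) {i : ℕ} (hi : i < v) :
    binZ n i = false := by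
  obtain ⟨t, ht⟩ := h
  have hq : n / 2 ^ i = 2 ^ (v - i) * t := by
    rw [ht, (by rw [← pow_add]; congr 1; omega : (2:ℤ) ^ v = 2 ^ i * 2 ^ (v - i)),
      mul_assoc]
    exact Int.mul_ediv_cancel_left _ (ne_of_gt (two_pow_pos' i))
  rw [binZ_eq, hq, decide_eq_false_iff_not]
  obtain ⟨w, hw⟩ : ∃ w, v - i = w + 1 := ⟨v - i - 1, by omega⟩
  rw [hw, pow_succ, mul_comm (2 ^ w) 2, mul_assoc]
  omega

lemma dvd_of_binZ_low {n : ℤ} : ∀ {v : ℕ}, (∀ i < v, binZ n i = false) → (2:ℤ) ^ v ∣ n := by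
  intro v
  induction v with
  | zero => intro _; simp
  | succ v ih =>
    intro h
    obtain ⟨t, ht⟩ := ih (fun i hi => h i (hi.trans (Nat.lt_succ_self v)))
    have hq : n / 2 ^ v = t := by
      rw [ht]; exact Int.mul_ediv_cancel_left _ (ne_of_gt (two_pow_pos' v))
    have hv := h v (Nat.lt_succ_self v)
    rw [binZ_eq, hq, decide_eq_false_iff_not] at hv
    obtain ⟨s, hs⟩ : (2:ℤ) ∣ t := by omega
    exact ⟨s, by rw [ht, hs, pow_succ]; ring⟩

lemma binN_eq_testBit (m i : ℕ) : binN m i = Nat.testBit m i :=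
  (Nat.testBit_eq_decide_div_mod_eq).symm

lemma binN_eq_false_of_lt {m i : ℕ} (h : m < 2 ^ i) : binN m i = false := by
  rw [binN, decide_eq_false_iff_not, Nat.div_eq_of_lt h]; omega

lemma binN_two_mul_succ (m i : ℕ) : binN (2 * m) (i + 1) = binN m i := by
  rw [binN, binN, pow_succ, mul_comm (2 ^ i) 2, ← Nat.div_div_eq_div_mul,
    Nat.mul_div_cancel_left m two_pos]

lemma binN_two_mul_add_one_succ (m i : ℕ) : binN (2 * m + 1) (i + 1) = binN m i := by
  rw [binN, binN, pow_succ, mul_comm (2 ^ i) 2, ← Nat.div_div_eq_div_mul,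
    (by omega : (2 * m + 1) / 2 = m)]

lemma binN_two_mul_zero (m : ℕ) : binN (2 * m) 0 = false := by
  rw [binN]; simp

lemma binN_two_mul_add_one_zero (m : ℕ) : binN (2 * m + 1) 0 = true := by
  rw [binN]; simp

lemma gray_two_mul_succ (m i : ℕ) : gray (2 * m) (i + 1) = gray (2 * m + 1) (i + 1) := by
  rw [gray, gray, binN_two_mul_succ, binN_two_mul_succ, binN_two_mul_add_one_succ,
    binN_two_mul_add_one_succ]

lemma gray_two_mul_zero (m : ℕ) : gray (2 * m + 1) 0 = !gray (2 * m) 0 := by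
  rw [gray, gray, binN_two_mul_zero, binN_two_mul_add_one_zero,
    binN_two_mul_succ, binN_two_mul_add_one_succ]
  cases binN m 0 <;> rfl

lemma binN_inj {m m' : ℕ} (h : ∀ i, binN m i = binN m' i) : m = m' := by
  apply Nat.eq_of_testBit_eq
  intro i
  rw [← binN_eq_testBit, ← binN_eq_testBit]; exact h i

lemma gray_inj {m m' : ℕ} (h : ∀ i, gray m i = gray m' i) : m = m' := by
  set J := max m m' with hJ
  have hm : m < 2 ^ J :=
    lt_of_lt_of_le (Nat.lt_two_pow_self (n := m)) (Nat.pow_le_pow_right two_pos (le_max_left m m'))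
  have hm' : m' < 2 ^ J :=
    lt_of_lt_of_le (Nat.lt_two_pow_self (n := m')) (Nat.pow_le_pow_right two_pos (le_max_right m m'))
  have key : ∀ d, binN m (J - d) = binN m' (J - d) := by
    intro d
    induction d with
    | zero =>
      rw [Nat.sub_zero, binN_eq_false_of_lt hm, binN_eq_false_of_lt hm']
    | succ d ih =>
      by_cases hd : d < J
      · have h1 : J - d = (J - (d + 1)) + 1 := by omega
        have h2 := h (J - (d + 1))
        rw [gray, gray, ← h1, ih] at h2
        cases hb : binN m' (J - d) <;> rw [hb] at h2 <;> simpa using h2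
      · have h1 : J - (d + 1) = J - d := by omega
        rw [h1]; exact ih
  apply binN_inj
  intro i
  by_cases hi : i ≤ J
  · have := key (J - i); rwa [Nat.sub_sub_self hi] at this
  · rw [binN_eq_false_of_lt, binN_eq_false_of_lt]
    · exact lt_of_lt_of_le hm' (Nat.pow_le_pow_right two_pos (by omega))
    · exact lt_of_lt_of_le hm (Nat.pow_le_pow_right two_pos (by omega))

lemma k_structure {k : ℕ} (hk2 : 2 ≤ k) (hke : k % 2 = 0) :
    1 ≤ padicValNat 2 k ∧ ∃ u, k = 2 ^ padicValNat 2 k * u ∧ u % 2 = 1 := by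
  have hk0 : k ≠ 0 := by omega
  obtain ⟨u, hu⟩ := pow_padicValNat_dvd (p := 2) (n := k)
  have hnd := pow_succ_padicValNat_not_dvd (p := 2) hk0
  constructor
  · by_contra hc
    have hv0 : padicValNat 2 k = 0 := by omega
    rw [hv0] at hnd
    exact hnd ⟨k / 2, by omega⟩
  · refine ⟨u, hu, ?_⟩
    by_contra hc
    obtain ⟨s, hs⟩ : 2 ∣ u := by omega
    refine hnd ⟨s, ?_⟩
    rw [pow_succ]
    calc k = 2 ^ padicValNat 2 k * u := hu
    _ = 2 ^ padicValNat 2 k * 2 * s := by rw [hs]; ring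

section kfacts
variable {k v u : ℕ} (hu : k = 2 ^ v * u) (hodd : u % 2 = 1) (hv : 1 ≤ v)

include hu hodd in
lemma binN_k_lt {i : ℕ} (hi : i < v) : binN k i = false := by
  have hq : k / 2 ^ i = 2 ^ (v - i) * u := by
    rw [hu, (by rw [← pow_add]; congr 1; omega : 2 ^ v = 2 ^ i * 2 ^ (v - i)), mul_assoc]
    exact Nat.mul_div_cancel_left _ (pow_pos two_pos i)
  rw [binN, hq, decide_eq_false_iff_not]
  obtain ⟨w, hw⟩ : ∃ w, v - i = w + 1 := ⟨v - i - 1, by omega⟩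
  rw [hw, pow_succ, mul_comm (2 ^ w) 2, mul_assoc]
  omega

include hu hodd in
lemma binN_k_v : binN k v = true := by
  have hq : k / 2 ^ v = u := by
    rw [hu]; exact Nat.mul_div_cancel_left _ (pow_pos two_pos v)
  rw [binN, hq, decide_eq_true_iff]
  omega

include hu hodd in
lemma binN_pred_le {i : ℕ} (hi : i ≤ v) : binN (k - 1) i = !binN k i := by
  have h2i : 0 < 2 ^ i := pow_pos two_pos i
  have hdvd : 2 ^ i ∣ k := by
    rw [hu, (by rw [← pow_add]; congr 1; omega : 2 ^ v = 2 ^ i * 2 ^ (v - i)), mul_assoc]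
    exact Dvd.intro _ rfl
  set q := k / 2 ^ i with hqdef
  have hk : 2 ^ i * q = k := Nat.mul_div_cancel' hdvd
  have hkpos : 0 < k := by
    rw [hu]; exact Nat.mul_pos (pow_pos two_pos v) (by omega)
  have hq1 : 1 ≤ q := by
    rcases Nat.eq_zero_or_pos q with h0 | h1
    · rw [h0, mul_zero] at hk; omega
    · exact h1
  obtain ⟨s, hs⟩ : ∃ s, q = s + 1 := ⟨q - 1, by omega⟩
  have hkm : k - 1 = 2 ^ i - 1 + 2 ^ i * s := by
    rw [← hk, hs, Nat.mul_add, mul_one]; omega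
  have hq' : (k - 1) / 2 ^ i = s := by
    rw [hkm, Nat.add_mul_div_left _ _ h2i, Nat.div_eq_of_lt (by omega), Nat.zero_add]
  rw [binN, binN, hq', ← hqdef, hs]
  by_cases hp : s % 2 = 1
  · have h2 : ¬ (s + 1) % 2 = 1 := by omega
    simp [hp, h2]
  · have h2 : (s + 1) % 2 = 1 := by omega
    simp [hp, h2]

include hu hodd in
lemma binN_pred_gt {i : ℕ} (hi : v < i) : binN (k - 1) i = binN k i := by
  have h2i : 0 < 2 ^ i := pow_pos two_pos i
  have hnd : ¬ 2 ^ i ∣ k := by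
    intro hc
    obtain ⟨t, ht⟩ := hc
    have h1 : 2 ^ (v + 1) ∣ k := dvd_trans (pow_dvd_pow 2 (by omega)) ⟨t, ht⟩
    obtain ⟨t2, ht2⟩ := h1
    rw [hu, pow_succ] at ht2
    have h2v : 0 < 2 ^ v := pow_pos two_pos v
    have : u = 2 * t2 := by
      have := Nat.eq_of_mul_eq_mul_left h2v
        (by linarith [ht2] : 2 ^ v * u = 2 ^ v * (2 * t2))
      omega
    omega
  have hmod : 1 ≤ k % 2 ^ i := by
    rcases Nat.eq_zero_or_pos (k % 2 ^ i) with h0 | h1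
    · exact absurd (Nat.dvd_of_mod_eq_zero h0) hnd
    · exact h1
  have hdm := Nat.div_add_mod k (2 ^ i)
  have hkm : k - 1 = k % 2 ^ i - 1 + 2 ^ i * (k / 2 ^ i) := by omega
  have hq' : (k - 1) / 2 ^ i = k / 2 ^ i := by
    rw [hkm, Nat.add_mul_div_left _ _ h2i, Nat.div_eq_of_lt (by
      have := Nat.mod_lt k h2i; omega)]
    omega
  rw [binN, binN, hq']

include hu hodd hv in
lemma gray_k_lt {i : ℕ} (hi : i < v - 1) : gray k i = false := by
  rw [gray, binN_k_lt hu hodd (by omega), binN_k_lt hu hodd (by omega)]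
  rfl

include hu hodd hv in
lemma gray_pred_lt {i : ℕ} (hi : i < v - 1) : gray (k - 1) i = false := by
  rw [gray, binN_pred_le hu hodd (by omega : i ≤ v), binN_pred_le hu hodd (by omega : i + 1 ≤ v),
    binN_k_lt hu hodd (by omega), binN_k_lt hu hodd (by omega)]
  rfl

include hu hodd hv in
lemma gray_k_vm1 : gray k (v - 1) = true := by
  rw [gray, binN_k_lt hu hodd (by omega), (by omega : v - 1 + 1 = v), binN_k_v hu hodd]
  rfl

include hu hodd hv in
lemma gray_pred_vm1 : gray (k - 1) (v - 1) = true := by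
  rw [gray, binN_pred_le hu hodd (by omega : v - 1 ≤ v), (by omega : v - 1 + 1 = v),
    binN_pred_le hu hodd le_rfl, binN_k_lt hu hodd (by omega), binN_k_v hu hodd]
  rfl

include hu hodd in
lemma gray_pred_v : gray (k - 1) v = !gray k v := by
  rw [gray, gray, binN_pred_le hu hodd le_rfl, binN_pred_gt hu hodd (by omega)]
  cases binN k v <;> cases binN k (v + 1) <;> rfl

include hu hodd in
lemma gray_pred_gt {i : ℕ} (hi : v < i) : gray (k - 1) i = gray k i := by
  rw [gray, gray, binN_pred_gt hu hodd hi, binN_pred_gt hu hodd (by omega)]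

include hu hodd hv in
lemma gray_pred_ne {i : ℕ} (hi : i ≠ v) : gray (k - 1) i = gray k i := by
  rcases Nat.lt_or_ge i v with h | h
  · rcases Nat.lt_or_ge i (v - 1) with h1 | h1
    · rw [gray_pred_lt hu hodd hv h1, gray_k_lt hu hodd hv h1]
    · have : i = v - 1 := by omega
      rw [this, gray_pred_vm1 hu hodd hv, gray_k_vm1 hu hodd hv]
  · exact gray_pred_gt hu hodd (by omega)

end kfacts

lemma y_move {a b : ℕ} {n : ℤ} {v : ℕ} (hv : 1 ≤ v)
    (hpre : ∀ i < v - 1, gray a i = false)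
    (hat : gray a (v - 1) = true)
    (hflip : gray b v = !gray a v)
    (hne : ∀ i, i ≠ v → gray b i = gray a i)
    (hbin : ∀ i < v, binZ n i = false) :
    yAct (code a n) = code b n := by
  have hcat : code a n (v - 1) = (true, false) := by
    simp only [code]; rw [hat, hbin (v - 1) (by omega)]
  have h : ∃ i, code a n i ≠ (false, false) := ⟨v - 1, by rw [hcat]; decide⟩
  have hfind : Nat.find h = v - 1 := by
    rw [Nat.find_eq_iff]
    refine ⟨by rw [hcat]; decide, fun j hj => ?_⟩
    simp only [not_not, ne_eq]
    simp only [code]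
    rw [hpre j hj, hbin j (by omega)]
  funext i
  simp only [yAct]
  rw [dif_pos h, hfind]
  by_cases hi : i = v - 1 + 1
  · rw [if_pos ⟨hi, hcat⟩]
    have hiv : i = v := by omega
    subst hiv
    simp only [code]
    rw [hflip]
  · rw [if_neg (fun hc => hi hc.1)]
    simp only [code]
    rw [hne i (by omega)]

lemma y_fix_one {a : ℕ} {n : ℤ} {v : ℕ} (hv : 1 ≤ v)
    (hpre : ∀ i < v - 1, gray a i = false)
    (hnd : ¬ (2:ℤ) ^ v ∣ n) :
    yAct (code a n) = code a n := by
  have hex : ∃ j, j < v ∧ binZ n j = true := by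
    by_contra hc
    push_neg at hc
    exact hnd (dvd_of_binZ_low fun i hi => by simpa using hc i hi)
  obtain ⟨j, hjv, hjt⟩ := hex
  have hwit : code a n j ≠ (false, false) := by
    simp only [code]
    rw [hjt]
    simp
  have h : ∃ i, code a n i ≠ (false, false) := ⟨j, hwit⟩
  have hclaim : ¬ code a n (Nat.find h) = (true, false) := by
    intro hc
    have hfle : Nat.find h ≤ j := Nat.find_min' h hwit
    have hg : gray a (Nat.find h) = true ∧ binZ n (Nat.find h) = false := by
      simpa [code, Prod.ext_iff] using hc
    have hge : ¬ Nat.find h < v - 1 := by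
      intro hlt
      rw [hpre _ hlt] at hg
      exact absurd hg.1 (by simp)
    have hfj : Nat.find h = j := by omega
    rw [hfj, hjt] at hg
    exact absurd hg.2 (by simp)
  funext i
  simp only [yAct]
  rw [dif_pos h, if_neg (fun hc => hclaim hc.2)]

/-- Under the Gray-code/binary encoding `code : ℕ × ℤ → S^ℕ`, the transducer states
`z`, `x`, `y` act on codes exactly as the edges of the Barbieri–Sablik H-graph:
`z` sends `(m,n)` to `(m,n+1)`; `x` exchanges `(2m,n)` and `(2m+1,n)`; `y` fixes `(0,n)`,
exchanges `(k-1,n)` and `(k,n)` for even `k ≥ 2` when `2^(v₂ k) ∣ n`, and fixes them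
otherwise.  Together with the injectivity of `code`, this says that the Schreier graph of
the action of `x, y, z` on the orbit of `code (0,0)` is isomorphic to the H-graph. -/
theorem hgraph_transducer_action :
    Function.Injective (fun p : ℕ × ℤ => code p.1 p.2) ∧
    (∀ (m : ℕ) (n : ℤ), zAct (code m n) = code m (n + 1)) ∧
    (∀ (m : ℕ) (n : ℤ),
      xAct (code (2 * m) n) = code (2 * m + 1) n ∧
      xAct (code (2 * m + 1) n) = code (2 * m) n) ∧
    (∀ n : ℤ, yAct (code 0 n) = code 0 n) ∧
    (∀ k : ℕ, 2 ≤ k → k % 2 = 0 → ∀ n : ℤ,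
      (((2 : ℤ) ^ padicValNat 2 k ∣ n) →
        yAct (code (k - 1) n) = code k n ∧ yAct (code k n) = code (k - 1) n) ∧
      (¬ ((2 : ℤ) ^ padicValNat 2 k ∣ n) →
        yAct (code (k - 1) n) = code (k - 1) n ∧ yAct (code k n) = code k n)) := by
  refine ⟨?_, ?_, ?_, ?_, ?_⟩
  · intro p q h
    have h1 : ∀ i, gray p.1 i = gray q.1 i := fun i => congrArg Prod.fst (congrFun h i)
    have h2 : ∀ i, binZ p.2 i = binZ q.2 i := fun i => congrArg Prod.snd (congrFun h i)
    exact Prod.ext (gray_inj h1) (binZ_inj h2)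
  · intro m n
    funext i
    simp only [zAct, code]
    rw [binZ_succ_int]
    by_cases h : (2:ℤ) ^ i ∣ n + 1
    · rw [if_pos h]; exact Prod.ext rfl (if_pos (fun j hj => ((lowOnes n i).2 h) j hj))
    · rw [if_neg h]; exact Prod.ext rfl (if_neg (fun hc => h ((lowOnes n i).1 hc)))
  · intro m n
    constructor
    · funext i
      cases i with
      | zero =>
        simp only [xAct, code, if_pos rfl, if_true]
        rw [gray_two_mul_zero]
      | succ j =>
        simp only [xAct, code, if_neg (Nat.succ_ne_zero j)]
        rw [gray_two_mul_succ]
    · funext i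
      cases i with
      | zero =>
        simp only [xAct, code, if_pos rfl, if_true]
        rw [gray_two_mul_zero]
        simp
      | succ j =>
        simp only [xAct, code, if_neg (Nat.succ_ne_zero j)]
        rw [gray_two_mul_succ]
  · intro n
    have g0 : ∀ i, gray 0 i = false := by
      intro i; simp [gray, binN, Nat.zero_div]
    funext i
    simp only [yAct]
    by_cases h : ∃ j, code 0 n j ≠ (false, false)
    · rw [dif_pos h, if_neg]
      intro hc
      have h2 := hc.2
      simp only [code] at h2
      rw [g0] at h2
      exact absurd (congrArg Prod.fst h2) (by simp)
    · rw [dif_neg h]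
  · intro k hk2 hke n
    obtain ⟨hv1, u, hu, hodd⟩ := k_structure hk2 hke
    constructor
    · intro hd
      have hbin : ∀ i < padicValNat 2 k, binZ n i = false :=
        fun i hi => binZ_low_of_dvd hd hi
      constructor
      · exact y_move hv1 (fun i hi => gray_pred_lt hu hodd hv1 hi)
          (gray_pred_vm1 hu hodd hv1)
          (by rw [gray_pred_v hu hodd]; cases gray k (padicValNat 2 k) <;> rfl)
          (fun i hi => (gray_pred_ne hu hodd hv1 hi).symm) hbin
      · exact y_move hv1 (fun i hi => gray_k_lt hu hodd hv1 hi)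
          (gray_k_vm1 hu hodd hv1)
          (gray_pred_v hu hodd)
          (fun i hi => gray_pred_ne hu hodd hv1 hi) hbin
    · intro hnd
      exact ⟨y_fix_one hv1 (fun i hi => gray_pred_lt hu hodd hv1 hi) hnd,
             y_fix_one hv1 (fun i hi => gray_k_lt hu hodd hv1 hi) hnd⟩
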